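/- A connected quiver is strongly connected if and only if every one of its biconnected components is strongly connected. -/

import Mathlib

open Relation

/-- One directed step along an arrow of the quiver. -/
def QStep {V A : Type} (s t : A → V) (i j : V) : Prop := ∃ a : A, s a = i ∧ t a = j

/-- One undirected step along an arrow of the quiver. -/
def UStep {V A : Type} (s t : A → V) (i j : V) : Prop :=
  ∃ a : A, (s a = i ∧ t a = j) ∨ (s a = j ∧ t a = i)

/-- A current is conserved if at each vertex the incoming total equals the outgoing total. -/
def Conserved {V A : Type} [Fintype A] [DecidableEq V] (s t : A → V) (lam : A → ℝ) : Prop :=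
  ∀ i : V, ∑ a ∈ Finset.univ.filter (fun a => t a = i), lam a
         = ∑ a ∈ Finset.univ.filter (fun a => s a = i), lam a

/-- A simple oriented cycle of the quiver: a nonempty cyclically composable list of arrows
whose sources are pairwise distinct. -/
structure SimpleCycle {V A : Type} (s t : A → V) where
  arrows : List A
  nonempty : arrows ≠ []
  chain : ∀ k : ℕ, ∀ h : k < arrows.length,
    t (arrows.get ⟨k, h⟩) =
      s (arrows.get ⟨(k + 1) % arrows.length, Nat.mod_lt _ (List.length_pos_iff.mpr nonempty)⟩)
  simple : (arrows.map s).Nodup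

/-- The set of vertices touched by a set of arrows. -/
def QVerts {V A : Type} (s t : A → V) (B : Set A) : Set V :=
  {v | ∃ a ∈ B, s a = v ∨ t a = v}

/-- One undirected step along an arrow of `B` avoiding the vertex set `X`. -/
def AvoidStep {V A : Type} (s t : A → V) (B : Set A) (X : Set V) (i j : V) : Prop :=
  i ∉ X ∧ j ∉ X ∧ ∃ a ∈ B, (s a = i ∧ t a = j) ∨ (s a = j ∧ t a = i)

/-- The subquiver on the arrow set `B` is connected after removing the vertices of `X`. -/
def ConnAvoid {V A : Type} (s t : A → V) (B : Set A) (X : Set V) : Prop :=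
  ∀ i ∈ QVerts s t B \ X, ∀ j ∈ QVerts s t B \ X,
    Relation.ReflTransGen (AvoidStep s t B X) i j

/-- A nonempty arrow set is biconnected if it stays connected after removing any
single vertex (or none). -/
def IsBiconnQ {V A : Type} (s t : A → V) (B : Set A) : Prop :=
  B.Nonempty ∧ ∀ X : Set V, X.Subsingleton → ConnAvoid s t B X

/-- A biconnected component (block) of the quiver: a maximal biconnected arrow set. -/
def IsBlockQ {V A : Type} (s t : A → V) (B : Set A) : Prop :=
  IsBiconnQ s t B ∧ ∀ B' : Set A, IsBiconnQ s t B' → B ⊆ B' → B' = B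

/-- The subquiver on the arrow set `B` is strongly connected: any two of its vertices
are joined by a directed path using arrows of `B`. -/
def StrongOn {V A : Type} (s t : A → V) (B : Set A) : Prop :=
  ∀ i ∈ QVerts s t B, ∀ j ∈ QVerts s t B,
    Relation.ReflTransGen (fun i j => ∃ a ∈ B, s a = i ∧ t a = j) i j


namespace Stmt8Aux

variable {V A : Type} {s t : A → V}

/-- A walk in the quiver given by a list of arrows. -/
inductive AWalk (s t : A → V) : V → V → List A → Prop
  | nil (v : V) : AWalk s t v v []
  | cons (a : A) {w : V} {l : List A} (h : AWalk s t (t a) w l) : AWalk s t (s a) w (a :: l)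

theorem AWalk.nil_eq {v w : V} (h : AWalk s t v w []) : v = w := by cases h; rfl

theorem awalk_cons {v w : V} {a : A} {l : List A} (h : AWalk s t v w (a :: l)) :
    s a = v ∧ AWalk s t (t a) w l := by cases h; exact ⟨rfl, by assumption⟩

theorem AWalk.end_mem {v w : V} {l : List A} (h : AWalk s t v w l) : w ∈ v :: l.map t := by
  induction h with
  | nil v => simp
  | cons a h ih =>
    simp only [List.map_cons, List.mem_cons] at ih ⊢
    tauto

theorem AWalk.end_mem_map {v w : V} {l : List A} (h : AWalk s t v w l) (hl : l ≠ []) :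
    w ∈ l.map t := by
  induction h with
  | nil => exact absurd rfl hl
  | @cons a w l0 h ih =>
    cases l0 with
    | nil => simp [← h.nil_eq]
    | cons b l1 =>
      simp only [List.map_cons]
      exact List.mem_cons_of_mem _ (by simpa using ih (by simp))

theorem AWalk.exists_concat {v w : V} {l : List A} (h : AWalk s t v w l) (hl : l ≠ []) :
    ∃ L, l.map t = L ++ [w] := by
  induction h with
  | nil => exact absurd rfl hl
  | @cons a w l0 h ih =>
    cases l0 with
    | nil => exact ⟨[], by simp [← h.nil_eq]⟩
    | cons b l1 =>
      obtain ⟨L, hL⟩ := ih (by simp)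
      exact ⟨t a :: L, by simp [hL]⟩

theorem AWalk.map_eq_concat {v w : V} {l : List A} (h : AWalk s t v w l) (hl : l ≠ []) :
    l.map t = (l.map t).dropLast ++ [w] := by
  obtain ⟨L, hL⟩ := h.exists_concat hl
  rw [hL, List.dropLast_concat]

theorem AWalk.end_unique {v w w' : V} {l : List A} (h : AWalk s t v w l)
    (h' : AWalk s t v w' l) : w = w' := by
  induction h with
  | nil => exact h'.nil_eq
  | cons a h ih => exact ih (awalk_cons h').2

theorem AWalk.src_mem {v w : V} {l : List A} (h : AWalk s t v w l) {a : A} (ha : a ∈ l) :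
    s a ∈ v :: l.map t := by
  induction h with
  | nil => simp at ha
  | @cons b w l0 h ih =>
    rcases List.mem_cons.1 ha with rfl | ha2
    · simp
    · simp only [List.map_cons]
      exact List.mem_cons_of_mem _ (ih ha2)

theorem AWalk.split {v w x : V} {l : List A} (h : AWalk s t v w l) (hx : x ∈ v :: l.map t) :
    ∃ l1 l2, l = l1 ++ l2 ∧ AWalk s t v x l1 ∧ AWalk s t x w l2 := by
  induction h with
  | nil v =>
    simp only [List.map_nil, List.mem_singleton] at hx
    subst hx
    exact ⟨[], [], rfl, .nil _, .nil _⟩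
  | @cons a w l0 h ih =>
    simp only [List.map_cons, List.mem_cons] at hx
    rcases hx with rfl | hx2
    · exact ⟨[], _, rfl, .nil _, .cons a h⟩
    · obtain ⟨l1, l2, rfl, hA, hB⟩ := ih (List.mem_cons.2 hx2)
      exact ⟨a :: l1, l2, rfl, .cons a hA, hB⟩

theorem AWalk.suffix_at {u w x : V} {l : List A} (h : AWalk s t u w l) (hx : x ∈ l.map t) :
    ∃ l2, AWalk s t x w l2 ∧ l2.length < l.length ∧ ∀ a ∈ l2, a ∈ l := by
  induction h with
  | nil => simp at hx
  | @cons a w l0 h ih =>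
    simp only [List.map_cons, List.mem_cons] at hx
    rcases hx with rfl | hx2
    · exact ⟨l0, h, by simp, fun b hb => List.mem_cons_of_mem _ hb⟩
    · obtain ⟨l2, h2, hlen, hsub⟩ := ih hx2
      exact ⟨l2, h2, by simp; omega, fun b hb => List.mem_cons_of_mem _ (hsub b hb)⟩

theorem AWalk.dedup_aux (n : ℕ) : ∀ {v w : V} (l : List A), l.length ≤ n →
    AWalk s t v w l →
    ∃ lp, AWalk s t v w lp ∧ (∀ a ∈ lp, a ∈ l) ∧ (v :: lp.map t).Nodup := by
  induction n with
  | zero =>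
    intro v w l hl h
    have : l = [] := List.length_eq_zero_iff.1 (Nat.le_zero.1 hl)
    subst this
    exact ⟨[], h, by simp, by simp⟩
  | succ n ih =>
    intro v w l hl h
    by_cases hv : v ∈ l.map t
    · obtain ⟨l2, h2, hlen, hsub⟩ := h.suffix_at hv
      obtain ⟨lp, hp, hsub2, hnd⟩ := ih l2 (by omega) h2
      exact ⟨lp, hp, fun a ha => hsub a (hsub2 a ha), hnd⟩
    · cases h with
      | nil => exact ⟨[], .nil _, by simp, by simp⟩
      | @cons a w l0 h0 =>
        obtain ⟨lp, hp, hsub2, hnd⟩ := ih l0 (by simp at hl; omega) h0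
        refine ⟨a :: lp, .cons a hp, ?_, ?_⟩
        · intro b hb
          rcases List.mem_cons.1 hb with rfl | hb2
          · simp
          · exact List.mem_cons_of_mem _ (hsub2 b hb2)
        · simp only [List.map_cons, List.nodup_cons] at hnd ⊢
          refine ⟨?_, hnd⟩
          intro hmem
          apply hv
          simp only [List.map_cons, List.mem_cons] at hmem ⊢
          rcases hmem with h1 | h1
          · exact Or.inl h1
          · exact Or.inr ((List.map_subset t (fun a ha => hsub2 a ha)) h1)

theorem AWalk.dedup {v w : V} {l : List A} (h : AWalk s t v w l) :
    ∃ lp, AWalk s t v w lp ∧ (∀ a ∈ lp, a ∈ l) ∧ (v :: lp.map t).Nodup :=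
  AWalk.dedup_aux l.length l le_rfl h

theorem AWalk.conn_forward {C : Set A} {X : Set V} {v w : V} {l : List A}
    (h : AWalk s t v w l) (hC : ∀ a ∈ l, a ∈ C) (hX : ∀ y ∈ v :: l.map t, y ∉ X) :
    Relation.ReflTransGen (AvoidStep s t C X) v w := by
  induction h with
  | nil => exact .refl
  | @cons a w l0 h ih =>
    refine Relation.ReflTransGen.head
      ⟨hX _ (by simp), hX _ (by simp), a, hC a (by simp), Or.inl ⟨rfl, rfl⟩⟩
      (ih (fun b hb => hC b (List.mem_cons_of_mem _ hb)) ?_)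
    intro y hy
    exact hX y (by simp only [List.map_cons, List.mem_cons] at hy ⊢; tauto)

theorem avoidStep_symm {C : Set A} {X : Set V} : Symmetric (AvoidStep s t C X) := by
  rintro i j ⟨hi, hj, a, ha, h | h⟩
  exacts [⟨hj, hi, a, ha, Or.inr h⟩, ⟨hj, hi, a, ha, Or.inl h⟩]

theorem avoid_mono {B C : Set A} {X : Set V} (hBC : B ⊆ C) {i j : V}
    (h : Relation.ReflTransGen (AvoidStep s t B X) i j) :
    Relation.ReflTransGen (AvoidStep s t C X) i j :=
  Relation.ReflTransGen.mono (p := AvoidStep s t C X) (fun x y ⟨hx, hy, a, ha, h⟩ => ⟨hx, hy, a, hBC ha, h⟩) _ _ h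

theorem singleton_biconn (s t : A → V) (a : A) : IsBiconnQ s t {a} := by
  refine ⟨⟨a, rfl⟩, fun X hX i hi j hj => ?_⟩
  obtain ⟨⟨b, hb, hib⟩, hiX⟩ := hi
  obtain ⟨⟨c, hc, hjc⟩, hjX⟩ := hj
  have hb2 : b = a := hb
  have hc2 : c = a := hc
  rw [hb2] at hib
  rw [hc2] at hjc
  by_cases hij : i = j
  · exact hij ▸ .refl
  · refine Relation.ReflTransGen.single ⟨hiX, hjX, a, rfl, ?_⟩
    rcases hib with hib | hib <;> rcases hjc with hjc | hjc
    · exact absurd (hib ▸ hjc ▸ rfl) hij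
    · exact Or.inl ⟨hib, hjc⟩
    · exact Or.inr ⟨hjc, hib⟩
    · exact absurd (hib ▸ hjc ▸ rfl) hij

theorem exists_block [Finite A] (s t : A → V) (a : A) : ∃ B, IsBlockQ s t B ∧ a ∈ B := by
  classical
  obtain ⟨B, hB, hmax⟩ := Set.Finite.exists_maximalFor id
    {B : Set A | IsBiconnQ s t B ∧ a ∈ B} (Set.toFinite _)
    ⟨{a}, singleton_biconn s t a, rfl⟩
  exact ⟨B, ⟨hB.1, fun B' hB' hBB' => Set.Subset.antisymm (hmax ⟨hB', hBB' hB.2⟩ hBB') hBB'⟩, hB.2⟩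

theorem block_induced {B : Set A} (hB : IsBlockQ s t B) {a : A}
    (hs : s a ∈ QVerts s t B) (ht : t a ∈ QVerts s t B) : a ∈ B := by
  have hQ : QVerts s t (B ∪ {a}) = QVerts s t B := by
    apply Set.Subset.antisymm
    · rintro x ⟨b, hb, hx⟩
      rcases hb with hb | hb
      · exact ⟨b, hb, hx⟩
      · rcases hb with rfl
        rcases hx with rfl | rfl
        exacts [hs, ht]
    · rintro x ⟨b, hb, hx⟩
      exact ⟨b, Or.inl hb, hx⟩
  have hbi : IsBiconnQ s t (B ∪ {a}) := by
    refine ⟨hB.1.1.mono Set.subset_union_left, fun X hX i hi j hj => ?_⟩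
    rw [Set.diff_eq, hQ] at hi hj
    exact avoid_mono Set.subset_union_left (hB.1.2 X hX i (by exact hi) j (by exact hj))
  have heq := hB.2 (B ∪ {a}) hbi Set.subset_union_left
  exact heq ▸ Set.mem_union_right B rfl

theorem exists_awalk {i j : V} (h : Relation.ReflTransGen (QStep s t) i j) :
    ∃ l, AWalk s t i j l := by
  induction h using Relation.ReflTransGen.head_induction_on with
  | refl => exact ⟨[], .nil j⟩
  | head hstep _ ih =>
    obtain ⟨l, hl⟩ := ih
    obtain ⟨a, rfl, rfl⟩ := hstep
    exact ⟨a :: l, .cons a hl⟩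

theorem first_return {B : Set A} {j : V} :
    ∀ {l : List A} {i : V}, AWalk s t i j l → l ≠ [] → j ∈ QVerts s t B →
    ∃ l1 l2 u, l = l1 ++ l2 ∧ l1 ≠ [] ∧ AWalk s t i u l1 ∧ AWalk s t u j l2 ∧
      u ∈ QVerts s t B ∧ ∀ x ∈ (l1.map t).dropLast, x ∉ QVerts s t B := by
  intro l
  induction l with
  | nil => intro i h hne; exact absurd rfl hne
  | cons a l0 ih =>
    intro i h _ hj
    obtain ⟨rfl, h0⟩ := awalk_cons h
    by_cases hta : t a ∈ QVerts s t B
    · exact ⟨[a], l0, t a, rfl, by simp, .cons a (.nil _), h0, hta, by simp⟩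
    · have hl0 : l0 ≠ [] := by
        rintro rfl
        rw [h0.nil_eq] at hta
        exact hta hj
      obtain ⟨l1, l2, u, rfl, hne1, hw1, hw2, huB, hint⟩ := ih h0 hl0 hj
      refine ⟨a :: l1, l2, u, rfl, by simp, .cons a hw1, hw2, huB, ?_⟩
      intro x hx
      rw [List.map_cons, List.dropLast_cons_of_ne_nil (by simpa using hne1)] at hx
      rcases List.mem_cons.1 hx with rfl | hx2
      · exact hta
      · exact hint x hx2

theorem path_reach {C : Set A} {X : Set V} {v w : V} {l : List A}
    (hw0 : AWalk s t v w l) (hnd : (v :: l.map t).Nodup)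
    (hlC : ∀ a ∈ l, a ∈ C) (hXs : X.Subsingleton)
    {x : V} (hx : x ∈ v :: l.map t) (hxX : x ∉ X) :
    ∃ e, (e = v ∨ e = w) ∧ e ∉ X ∧ Relation.ReflTransGen (AvoidStep s t C X) x e := by
  by_cases hXP : ∃ u ∈ X, u ∈ v :: l.map t
  · obtain ⟨u, huX, hup⟩ := hXP
    have hXu : X = {u} := hXs.eq_singleton_of_mem huX
    obtain ⟨l1, l2, rfl, hw1, hw2⟩ := hw0.split hup
    have hnd2 : ((v :: l1.map t) ++ l2.map t).Nodup := by
      simpa [List.map_append] using hnd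
    have hxu : x ≠ u := fun h => hxX (h ▸ huX)
    have hx2 : x ∈ v :: l1.map t ∨ x ∈ l2.map t := by
      rcases List.mem_cons.1 hx with rfl | hx3
      · exact Or.inl (by simp)
      · rw [List.map_append] at hx3
        rcases List.mem_append.1 hx3 with h | h
        · exact Or.inl (List.mem_cons_of_mem _ h)
        · exact Or.inr h
    rcases hx2 with hx3 | hx3
    · obtain ⟨p, q, rfl, hwp, hwq⟩ := hw1.split hx3
      have hql : q ≠ [] := by
        rintro rfl
        exact hxu (hwp.end_unique (by simpa using hw1))
      have huq : u ∈ q.map t := hwq.end_mem_map hql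
      have hu_not : ∀ y ∈ v :: p.map t, y ∉ X := by
        intro y hy hyX
        rw [hXu, Set.mem_singleton_iff] at hyX
        rw [hyX] at hy
        have hnd3 : ((v :: p.map t) ++ (q.map t ++ l2.map t)).Nodup := by
          simpa [List.map_append, List.append_assoc] using hnd
        exact (List.disjoint_of_nodup_append hnd3) hy (List.mem_append_left _ huq)
      have hback : Relation.ReflTransGen (AvoidStep s t C X) v x :=
        hwp.conn_forward
          (fun a ha => hlC a (List.mem_append_left _ (List.mem_append_left _ ha))) hu_not
      exact ⟨v, Or.inl rfl, hu_not v (by simp),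
        (by haveI : Std.Symm (AvoidStep s t C X) := ⟨avoidStep_symm⟩; exact Relation.ReflTransGen.symmetric.symm _ _ hback)⟩
    · obtain ⟨p, q, rfl, hwp, hwq⟩ := hw2.split (List.mem_cons_of_mem _ hx3)
      have hu_not : ∀ y ∈ x :: q.map t, y ∉ X := by
        intro y hy hyX
        rw [hXu, Set.mem_singleton_iff] at hyX
        rw [hyX] at hy
        rcases List.mem_cons.1 hy with h | h
        · exact hxu h.symm
        · have hul1 : u ∈ v :: l1.map t := hw1.end_mem
          have hql2 : u ∈ (p ++ q).map t := by
            rw [List.map_append]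
            exact List.mem_append_right _ h
          exact (List.disjoint_of_nodup_append hnd2) hul1 hql2
      have hwX : w ∉ X := hu_not w hwq.end_mem
      refine ⟨w, Or.inr rfl, hwX, hwq.conn_forward ?_ hu_not⟩
      intro a ha
      exact hlC a (List.mem_append_right _ (List.mem_append_right _ ha))
  · push_neg at hXP
    obtain ⟨l1, l2, rfl, hw1, hw2⟩ := hw0.split hx
    have hsafe : ∀ y ∈ x :: l2.map t, y ∉ X := by
      intro y hy hyX
      apply hXP y hyX
      rcases List.mem_cons.1 hy with rfl | hy2
      · exact hx
      · rw [List.map_append]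
        exact List.mem_cons_of_mem _ (List.mem_append_right _ hy2)
    exact ⟨w, Or.inr rfl, hsafe w hw2.end_mem,
      hw2.conn_forward (fun a ha => hlC a (List.mem_append_right _ ha)) hsafe⟩

theorem ear {B : Set A} (hB : IsBlockQ s t B) {v w : V} {l : List A}
    (hw0 : AWalk s t v w l) (hlen : 2 ≤ l.length)
    (hv : v ∈ QVerts s t B) (hw : w ∈ QVerts s t B) (hvw : v ≠ w)
    (hnd : (v :: l.map t).Nodup)
    (hint : ∀ x ∈ (l.map t).dropLast, x ∉ QVerts s t B) : False := by
  classical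
  set C : Set A := B ∪ {a | a ∈ l} with hC
  have hlne : l ≠ [] := by rintro rfl; simp at hlen
  have hBC : B ⊆ C := Set.subset_union_left
  have hlC : ∀ a ∈ l, a ∈ C := fun a ha => Or.inr ha
  have hbi : IsBiconnQ s t C := by
    refine ⟨hB.1.1.mono hBC, fun X hX i hi j hj => ?_⟩
    obtain ⟨hiQ, hiX⟩ := hi
    obtain ⟨hjQ, hjX⟩ := hj
    have reach : ∀ x, x ∈ QVerts s t C → x ∉ X →
        ∃ e, (e ∈ QVerts s t B ∧ e ∉ X) ∧
          Relation.ReflTransGen (AvoidStep s t C X) x e := by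
      intro x hxQ hxX
      by_cases hxB : x ∈ QVerts s t B
      · exact ⟨x, ⟨hxB, hxX⟩, .refl⟩
      · have hxpath : x ∈ v :: l.map t := by
          obtain ⟨b, hb, hxb⟩ := hxQ
          rcases hb with hb | hb
          · exact absurd ⟨b, hb, hxb⟩ hxB
          · rcases hxb with rfl | rfl
            · exact hw0.src_mem hb
            · exact List.mem_cons_of_mem _ (List.mem_map_of_mem (f := t) hb)
        obtain ⟨e, he, heX, hpath⟩ := path_reach hw0 hnd hlC hX hxpath hxX
        refine ⟨e, ⟨?_, heX⟩, hpath⟩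
        rcases he with rfl | rfl
        exacts [hv, hw]
    obtain ⟨ei, ⟨heiB, heiX⟩, hpi⟩ := reach i hiQ hiX
    obtain ⟨ej, ⟨hejB, hejX⟩, hpj⟩ := reach j hjQ hjX
    have hmid : Relation.ReflTransGen (AvoidStep s t C X) ei ej :=
      avoid_mono hBC (hB.1.2 X hX ei ⟨heiB, heiX⟩ ej ⟨hejB, hejX⟩)
    exact (hpi.trans hmid).trans (by haveI : Std.Symm (AvoidStep s t C X) := ⟨avoidStep_symm⟩; exact Relation.ReflTransGen.symmetric.symm _ _ hpj)
  have hCeq : C = B := hB.2 C hbi hBC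
  obtain ⟨a, l0, rfl⟩ : ∃ a l0, l = a :: l0 := by
    cases l with
    | nil => simp at hlen
    | cons a l0 => exact ⟨a, l0, rfl⟩
  have haB : a ∈ B := hCeq ▸ (hlC a (by simp))
  have htaB : t a ∈ QVerts s t B := ⟨a, haB, Or.inr rfl⟩
  refine hint (t a) ?_ htaB
  have hl0 : l0 ≠ [] := by rintro rfl; simp at hlen
  rw [List.map_cons, List.dropLast_cons_of_ne_nil (by simpa using hl0)]
  simp

theorem excursion {B : Set A} (hB : IsBlockQ s t B) {v w : V} {l : List A}
    (hw0 : AWalk s t v w l) (hv : v ∈ QVerts s t B) (hw : w ∈ QVerts s t B)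
    (hint : ∀ x ∈ (l.map t).dropLast, x ∉ QVerts s t B) :
    Relation.ReflTransGen (fun i j => ∃ a ∈ B, s a = i ∧ t a = j) v w := by
  classical
  obtain ⟨lp, hwp, hsub, hnd⟩ := hw0.dedup
  rcases lp with _ | ⟨a, ltl⟩
  · exact hwp.nil_eq ▸ .refl
  rcases ltl with _ | ⟨b, ltl2⟩
  · obtain ⟨ha, h0⟩ := awalk_cons hwp
    have htw : t a = w := h0.nil_eq
    refine Relation.ReflTransGen.single ⟨a, ?_, ha, htw⟩
    exact block_induced hB (by rw [ha]; exact hv) (by rw [htw]; exact hw)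
  · by_cases hvw : v = w
    · exact hvw ▸ .refl
    · exfalso
      refine ear hB hwp (by simp) hv hw hvw hnd ?_
      intro x hx
      have hxl : x ∈ (a :: b :: ltl2).map t := List.dropLast_subset _ hx
      have hxl2 : x ∈ l.map t := by
        obtain ⟨c, hc, rfl⟩ := List.mem_map.1 hxl
        exact List.mem_map_of_mem (f := t) (hsub c hc)
      have hlne : l ≠ [] := by
        rintro rfl
        exact absurd (hsub a (by simp)) (by simp)
      rw [hw0.map_eq_concat hlne] at hxl2
      rcases List.mem_append.1 hxl2 with h | h
      · exact hint x h
      · simp only [List.mem_singleton] at h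
        subst h
        have hnd3 : ((a :: b :: ltl2).map t).Nodup := (List.nodup_cons.1 hnd).2
        have hdec : (a :: b :: ltl2).map t = ((a :: b :: ltl2).map t).dropLast ++ [x] :=
          hwp.map_eq_concat (by simp)
        rw [hdec] at hnd3
        exact ((List.disjoint_of_nodup_append hnd3) hx (by simp)).elim

theorem walk_to_bpath {B : Set A} (hB : IsBlockQ s t B) {j : V} (hj : j ∈ QVerts s t B) :
    ∀ (n : ℕ) (l : List A), l.length ≤ n → ∀ i, i ∈ QVerts s t B → AWalk s t i j l →
      Relation.ReflTransGen (fun i j => ∃ a ∈ B, s a = i ∧ t a = j) i j := by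
  intro n
  induction n with
  | zero =>
    intro l hl i hi hw
    have : l = [] := List.length_eq_zero_iff.1 (Nat.le_zero.1 hl)
    subst this
    exact hw.nil_eq ▸ .refl
  | succ n ih =>
    intro l hl i hi hw
    rcases eq_or_ne l [] with rfl | hlne
    · exact hw.nil_eq ▸ .refl
    · obtain ⟨l1, l2, u, rfl, hne1, hw1, hw2, huB, hint⟩ := first_return hw hlne hj
      have h1 := excursion hB hw1 hi huB hint
      have h2 := ih l2 (by
        simp only [List.length_append] at hl
        have := List.length_pos_iff.2 hne1
        omega) u huB hw2
      exact h1.trans h2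

end Stmt8Aux

/-- A connected quiver is strongly connected iff each of its biconnected components
is strongly connected. -/
theorem stmt8 {V A : Type} [Fintype V] [Fintype A] [DecidableEq V] [DecidableEq A]
    (s t : A → V)
    (hconn : ∀ i j : V, Relation.ReflTransGen (UStep s t) i j) :
    (∀ i j : V, Relation.ReflTransGen (QStep s t) i j) ↔
      (∀ B : Set A, IsBlockQ s t B → StrongOn s t B) := by
  constructor
  · intro hstrong B hB i hi j hj
    obtain ⟨l, hl⟩ := Stmt8Aux.exists_awalk (hstrong i j)
    exact Stmt8Aux.walk_to_bpath hB hj l.length l le_rfl i hi hl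
  · intro hblocks
    have harrow : ∀ a : A, Relation.ReflTransGen (QStep s t) (t a) (s a) := by
      intro a
      obtain ⟨B, hB, haB⟩ := Stmt8Aux.exists_block s t a
      have h := hblocks B hB (t a) ⟨a, haB, Or.inr rfl⟩ (s a) ⟨a, haB, Or.inl rfl⟩
      exact Relation.ReflTransGen.mono (p := QStep s t) (fun x y ⟨b, _, hb1, hb2⟩ => ⟨b, hb1, hb2⟩) _ _ h
    intro i j
    induction hconn i j with
    | refl => exact .refl
    | tail _ hstep ih =>
      refine ih.trans ?_
      obtain ⟨a, ⟨h1, h2⟩ | ⟨h1, h2⟩⟩ := hstep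
      · exact Relation.ReflTransGen.single ⟨a, h1, h2⟩
      · rw [← h1, ← h2]
        exact harrow a
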